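/- Let 𝒜 be a finite set, let η : 𝒜 → ℝ_{>0}, and let ψ(p) = Σ_{a∈𝒜} (1/η(a)) p(a) ln p(a) (the negative Shannon entropy regularizer with coordinate-wise learning rates). Let p_t ∈ Δ(𝒜) with p_t(a) > 0 for every a, and let ℓ ∈ ℝ^𝒜 satisfy η(a) ℓ(a) ≥ −1 for every a. Then max_{p ∈ Δ(𝒜)} { ⟨p_t − p, ℓ⟩ − D_ψ(p, p_t) } ≤ Σ_{a∈𝒜} η(a) p_t(a) ℓ(a)². -/

import Mathlib

open Finset

lemma exp_quad_aux (w : ℝ) (hw : w ≤ 1) : Real.exp w ≤ 1 + w + w^2 := by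
  rcases le_or_gt (-1) w with h | h
  · have habs : |w| ≤ 1 := abs_le.2 ⟨h, hw⟩
    have hb := Real.exp_bound habs (by norm_num : 0 < 3)
    have hs : ∑ i ∈ Finset.range 3, w ^ i / (Nat.factorial i) = 1 + w + w^2/2 := by
      simp [Finset.sum_range_succ, Nat.factorial]
    rw [hs] at hb
    norm_num [Nat.factorial] at hb
    have h2 : |w| ^ 3 ≤ w^2 := by
      have : |w|^3 ≤ |w|^2 := pow_le_pow_of_le_one (abs_nonneg w) habs (by norm_num)
      simpa [sq_abs] using this
    have := abs_le.1 hb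
    nlinarith [this.2]
  · have : Real.exp w ≤ 1 := Real.exp_le_one_iff.2 (by linarith)
    nlinarith

lemma key_pt_aux (η pt x ℓ : ℝ) (hη : 0 < η) (hpt : 0 < pt) (hx : 0 ≤ x)
    (hz : η * ℓ ≥ -1) :
    (pt - x) * ℓ - ((1/η) * (x * Real.log x) - (1/η) * (pt * Real.log pt))
      + (1/η) * (Real.log pt + 1) * (x - pt) ≤ η * pt * ℓ ^ 2 := by
  have hc : ∀ c : ℝ, (c + 1) * x - Real.exp c ≤ x * Real.log x := by
    intro c
    rcases hx.eq_or_lt with h | h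
    · simp [← h, (Real.exp_pos c).le]
    · have h0 := Real.add_one_le_exp (c - Real.log x)
      have hec : Real.exp c = x * Real.exp (c - Real.log x) := by
        rw [Real.exp_sub, Real.exp_log h]; field_simp
      nlinarith [mul_le_mul_of_nonneg_left h0 h.le]
  have h1 := hc (Real.log pt - η * ℓ)
  have hec2 : Real.exp (Real.log pt - η * ℓ) = pt * Real.exp (-(η * ℓ)) := by
    rw [Real.exp_sub, Real.exp_log hpt, Real.exp_neg]; ring
  have h2 : Real.exp (-(η * ℓ)) ≤ 1 + (-(η * ℓ)) + (-(η * ℓ))^2 :=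
    exp_quad_aux _ (by linarith)
  have h2' := mul_le_mul_of_nonneg_left h2 hpt.le
  have hscaled : (pt - x) * (η * ℓ) - (x * Real.log x - pt * Real.log pt)
      + (Real.log pt + 1) * (x - pt) ≤ pt * (η * ℓ)^2 := by
    nlinarith [h1, hec2, h2']
  have hηne : η ≠ 0 := hη.ne'
  calc (pt - x) * ℓ - ((1/η) * (x * Real.log x) - (1/η) * (pt * Real.log pt))
      + (1/η) * (Real.log pt + 1) * (x - pt)
      = ((pt - x) * (η * ℓ) - (x * Real.log x - pt * Real.log pt)
          + (Real.log pt + 1) * (x - pt)) / η := by field_simp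
    _ ≤ (pt * (η * ℓ)^2) / η := by gcongr
    _ = η * pt * ℓ^2 := by field_simp

/-- **Stability under the Shannon entropy regularizer.**
Let `ψ p = ∑ a, (1 / η a) * (p a * log (p a))` with coordinate-wise learning rates
`η a > 0`, let `pt` be a point of the probability simplex with strictly positive
coordinates, and let `ℓ` satisfy `η a * ℓ a ≥ -1` for every `a`.  Then for every `p`
in the probability simplex,
`⟨pt - p, ℓ⟩ - D_ψ(p, pt) ≤ ∑ a, η a * pt a * (ℓ a)²`, where
`D_ψ(p, pt) = ψ p - ψ pt - ⟨∇ψ(pt), p - pt⟩`. -/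
theorem shannon_entropy_stability
    {𝒜 : Type*} [Fintype 𝒜]
    (η : 𝒜 → ℝ) (hη : ∀ a, 0 < η a)
    (ψ : (𝒜 → ℝ) → ℝ)
    (hψ : ψ = fun p : 𝒜 → ℝ => ∑ a, (1 / η a) * (p a * Real.log (p a)))
    (pt : 𝒜 → ℝ) (hpt_pos : ∀ a, 0 < pt a) (hpt_sum : ∑ a, pt a = 1)
    (ℓ : 𝒜 → ℝ) (hℓ : ∀ a, η a * ℓ a ≥ -1) :
    ∀ p : 𝒜 → ℝ, (∀ a, 0 ≤ p a) → ∑ a, p a = 1 →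
      (∑ a, (pt a - p a) * ℓ a) - (ψ p - ψ pt - fderiv ℝ ψ pt (p - pt))
        ≤ ∑ a, η a * pt a * ℓ a ^ 2 := by
  intro p hp_nonneg hp_sum
  have hfd : fderiv ℝ ψ pt (p - pt)
      = ∑ a, (1 / η a) * (Real.log (pt a) + 1) * (p a - pt a) := by
    have hF : HasFDerivAt ψ
        (∑ a : 𝒜, ((1 / η a) * (Real.log (pt a) + 1)) •
          (ContinuousLinearMap.proj (R := ℝ) (φ := fun _ : 𝒜 => ℝ) a)) pt := by
      rw [hψ]
      apply HasFDerivAt.fun_sum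
      intro a _
      have hbase : HasDerivAt (fun x : ℝ => x * Real.log x)
          (Real.log (pt a) + 1) (pt a) := Real.hasDerivAt_mul_log (hpt_pos a).ne'
      have hproj :=
        (ContinuousLinearMap.proj (R := ℝ) (φ := fun _ : 𝒜 => ℝ) a).hasFDerivAt (x := pt)
      have := (hbase.comp_hasFDerivAt pt hproj).const_mul (1 / η a)
      simpa [smul_smul, Function.comp] using this
    rw [hF.fderiv]
    simp [ContinuousLinearMap.sum_apply, mul_assoc]
  rw [hfd]; simp only [hψ]
  have hsum : (∑ a, (pt a - p a) * ℓ a)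
      - ((∑ a, (1 / η a) * (p a * Real.log (p a)))
        - (∑ a, (1 / η a) * (pt a * Real.log (pt a)))
        - ∑ a, (1 / η a) * (Real.log (pt a) + 1) * (p a - pt a))
      = ∑ a, ((pt a - p a) * ℓ a
          - ((1 / η a) * (p a * Real.log (p a)) - (1 / η a) * (pt a * Real.log (pt a)))
          + (1 / η a) * (Real.log (pt a) + 1) * (p a - pt a)) := by
    rw [Finset.sum_add_distrib, Finset.sum_sub_distrib, Finset.sum_sub_distrib]
    ring
  rw [hsum]
  exact Finset.sum_le_sum fun a _ =>
    key_pt_aux (η a) (pt a) (p a) (ℓ a) (hη a) (hpt_pos a) (hp_nonneg a) (hℓ a)
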